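/- Every string of type T that is not Du Val belongs to the smallest collection of strings that contains [4], [3,3], and every string [3,2,…,2,3] (a 3, then k ≥ 0 entries equal to 2, then a 3), and that is closed under the two operations [a_1,…,a_r] ↦ [2, a_1,…,a_{r−1}, a_r+1] and [a_1,…,a_r] ↦ [a_1+1, a_2,…,a_r, 2]. -/

import Mathlib

/-- Hirzebruch–Jung continued fraction value of a list:
`hjValue [a₁, …, a_r] = a₁ - 1/(a₂ - 1/(⋯ - 1/a_r))`.
(For the empty list the value is `0`, and since `1/0 = 0` in `ℚ`,
`hjValue [a] = a`.) -/
def hjValue : List ℤ → ℚ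
  | [] => 0
  | a :: l => (a : ℚ) - 1 / hjValue l

/-- A *string* is a nonempty finite sequence of integers, all `≥ 2`. -/
def IsString (l : List ℤ) : Prop := l ≠ [] ∧ ∀ x ∈ l, 2 ≤ x

/-- Two strings are *conjugate* if their values are `m/q` and `m/(m-q)`
for some coprime integers `m > q ≥ 1`. -/
def IsConjugate (a b : List ℤ) : Prop :=
  ∃ m q : ℕ, 1 ≤ q ∧ q < m ∧ Nat.Coprime m q ∧
    hjValue a = (m : ℚ) / q ∧ hjValue b = (m : ℚ) / ((m : ℚ) - q)

/-- A string is of *type T* if its value, written in lowest terms `n/q` with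
coprime `n > q ≥ 1`, satisfies `n ∣ (q+1)²`. -/
def IsTString (l : List ℤ) : Prop :=
  IsString l ∧ ∃ n q : ℕ, 1 ≤ q ∧ q < n ∧ Nat.Coprime n q ∧
    hjValue l = (n : ℚ) / q ∧ n ∣ (q + 1) ^ 2

/-- A string is *Du Val* if all its entries equal `2`. -/
def IsDuVal (l : List ℤ) : Prop := ∀ x ∈ l, x = 2

/-- The smallest collection of lists containing `[4]`, `[3,3]`, and every
`[3,2,…,2,3]`, and closed under the operations
`[a₁,…,a_r] ↦ [2, a₁,…,a_{r-1}, a_r + 1]` and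
`[a₁,…,a_r] ↦ [a₁ + 1, a₂,…,a_r, 2]`. -/
inductive TGen : List ℤ → Prop
  | four : TGen [4]
  | threeThree : TGen [3, 3]
  | chain (k : ℕ) : TGen (3 :: (List.replicate k 2 ++ [3]))
  | left {a : List ℤ} : TGen a → TGen (2 :: (a.dropLast ++ [a.getLastI + 1]))
  | right {a : List ℤ} : TGen a → TGen ((a.headI + 1) :: (a.tail ++ [2]))

def hjA : List ℤ → ℤ × ℤ × ℤ × ℤ
  | [] => (1, 0, 0, -1)
  | a :: l =>
    let x := hjA l
    (a * x.1 - x.2.1, x.1, a * x.2.2.1 - x.2.2.2, x.2.2.1)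

def hjN (l : List ℤ) : ℤ := (hjA l).1
def hjD (l : List ℤ) : ℤ := (hjA l).2.1
def hjP (l : List ℤ) : ℤ := (hjA l).2.2.1
def hjV (l : List ℤ) : ℤ := (hjA l).2.2.2

@[simp] lemma hjN_nil : hjN [] = 1 := rfl
@[simp] lemma hjD_nil : hjD [] = 0 := rfl
@[simp] lemma hjP_nil : hjP [] = 0 := rfl
@[simp] lemma hjV_nil : hjV [] = -1 := rfl
@[simp] lemma hjN_cons (a : ℤ) (l : List ℤ) : hjN (a :: l) = a * hjN l - hjD l := rfl
@[simp] lemma hjD_cons (a : ℤ) (l : List ℤ) : hjD (a :: l) = hjN l := rfl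
@[simp] lemma hjP_cons (a : ℤ) (l : List ℤ) : hjP (a :: l) = a * hjP l - hjV l := rfl
@[simp] lemma hjV_cons (a : ℤ) (l : List ℤ) : hjV (a :: l) = hjP l := rfl

lemma hj_concat (l : List ℤ) (x : ℤ) :
    hjN (l ++ [x]) = x * hjN l - hjP l ∧ hjD (l ++ [x]) = x * hjD l - hjV l ∧
    hjP (l ++ [x]) = hjN l ∧ hjV (l ++ [x]) = hjD l := by
  induction l with
  | nil => simp
  | cons a l ih =>
    obtain ⟨i1, i2, i3, i4⟩ := ih
    refine ⟨?_, ?_, ?_, ?_⟩ <;>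
      (simp only [List.cons_append, hjN_cons, hjD_cons, hjP_cons, hjV_cons, i1, i2, i3, i4]
       <;> try ring)

lemma hjDet (l : List ℤ) : hjP l * hjD l - hjN l * hjV l = 1 := by
  induction l with
  | nil => simp
  | cons a l ih => simp only [hjN_cons, hjD_cons, hjP_cons, hjV_cons]; linear_combination ih

lemma hjBounds (l : List ℤ) (h : ∀ x ∈ l, 2 ≤ x) :
    0 ≤ hjD l ∧ hjD l < hjN l ∧ -1 ≤ hjV l ∧ hjV l < hjP l ∧
    1 ≤ hjD l - hjV l ∧ hjD l - hjV l ≤ hjN l - hjP l := by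
  induction l with
  | nil => norm_num
  | cons a l ih =>
    have ha : 2 ≤ a := h a (by simp)
    obtain ⟨h1, h2, h3, h4, h5, h6⟩ := ih (fun x hx => h x (by simp [hx]))
    simp only [hjN_cons, hjD_cons, hjP_cons, hjV_cons]
    refine ⟨by linarith, by nlinarith, by linarith, by nlinarith, by linarith, by nlinarith⟩

lemma hjN_two_le (l : List ℤ) (h : ∀ x ∈ l, 2 ≤ x) (hne : l ≠ []) : 2 ≤ hjN l := by
  match l with
  | a :: t =>
    have ha : 2 ≤ a := h a (by simp)
    obtain ⟨h1, h2, _, _, _, _⟩ := hjBounds t (fun x hx => h x (by simp [hx]))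
    simp only [hjN_cons]; nlinarith

lemma hjD_one_le (l : List ℤ) (h : ∀ x ∈ l, 2 ≤ x) (hne : l ≠ []) : 1 ≤ hjD l := by
  match l with
  | a :: t =>
    obtain ⟨h1, h2, _, _, _, _⟩ := hjBounds t (fun x hx => h x (by simp [hx]))
    simp only [hjD_cons]; omega

lemma hjP_one_le (l : List ℤ) (h : ∀ x ∈ l, 2 ≤ x) (hne : l ≠ []) : 1 ≤ hjP l := by
  match l with
  | a :: t =>
    have ha : 2 ≤ a := h a (by simp)
    obtain ⟨_, _, h3, h4, _, _⟩ := hjBounds t (fun x hx => h x (by simp [hx]))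
    simp only [hjP_cons]; nlinarith

lemma hjValue_eq (l : List ℤ) (h : ∀ x ∈ l, 2 ≤ x) :
    hjValue l = (hjN l : ℚ) / (hjD l : ℚ) := by
  induction l with
  | nil => simp [hjValue]
  | cons a l ih =>
    have ht : ∀ x ∈ l, 2 ≤ x := fun x hx => h x (by simp [hx])
    obtain ⟨h1, h2, _, _, _, _⟩ := hjBounds l ht
    have hN0 : (hjN l : ℚ) ≠ 0 := by exact_mod_cast (by omega : hjN l ≠ 0)
    rw [hjValue, ih ht]
    simp only [hjN_cons, hjD_cons]
    rw [one_div_div]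
    field_simp
    push_cast
    try ring

lemma duVal_den (l : List ℤ) (h : IsDuVal l) : hjD l = hjN l - 1 := by
  induction l with
  | nil => simp
  | cons a l ih =>
    have ha : a = 2 := h a (by simp)
    have ih' := ih (fun x hx => h x (by simp [hx]))
    simp only [hjN_cons, hjD_cons, ha]
    omega

lemma den_duVal (l : List ℤ) (h : ∀ x ∈ l, 2 ≤ x) (hd : hjD l = hjN l - 1) : IsDuVal l := by
  induction l with
  | nil => intro x hx; simp at hx
  | cons a l ih =>
    have ha : 2 ≤ a := h a (by simp)
    have ht : ∀ x ∈ l, 2 ≤ x := fun x hx => h x (by simp [hx])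
    obtain ⟨h1, h2, _, _, _, _⟩ := hjBounds l ht
    simp only [hjN_cons, hjD_cons] at hd
    have ha2 : a = 2 := by nlinarith
    subst ha2
    have hdl : hjD l = hjN l - 1 := by omega
    intro x hx
    rcases List.mem_cons.mp hx with rfl | hx
    · rfl
    · exact ih ht hdl x hx

lemma chain_eq (l : List ℤ) (h : ∀ x ∈ l, 2 ≤ x) (hne : l ≠ [])
    (hd : hjD l = hjN l - 2) : ∃ k, l = List.replicate k 2 ++ [3] := by
  induction l with
  | nil => exact absurd rfl hne
  | cons a t ih =>
    have ha : 2 ≤ a := h a (by simp)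
    have ht : ∀ x ∈ t, 2 ≤ x := fun x hx => h x (by simp [hx])
    rcases eq_or_ne t [] with rfl | htne
    · simp only [hjN_cons, hjD_cons, hjN_nil, hjD_nil] at hd
      have : a = 3 := by omega
      exact ⟨0, by simp [this]⟩
    · obtain ⟨h1, h2, _, _, _, _⟩ := hjBounds t ht
      have hN2 : 2 ≤ hjN t := hjN_two_le t ht htne
      simp only [hjN_cons, hjD_cons] at hd
      have ha2 : a = 2 := by nlinarith
      subst ha2
      have hdl : hjD t = hjN t - 2 := by omega
      obtain ⟨k, hk⟩ := ih ht htne hdl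
      exact ⟨k + 1, by simp [hk, List.replicate_succ]⟩

lemma eq_zero_of_bounded {n d c : ℤ} (h : d = n * c) (h1 : -n < d) (h2 : d < n)
    (h3 : 0 < n) : d = 0 := by
  rcases lt_trichotomy c 0 with hc | hc | hc
  · nlinarith
  · rw [hc, mul_zero] at h; exact h
  · nlinarith

lemma one_le_of_sq {n q E : ℤ} (h : (q + 1) ^ 2 = n * E) (hn : 0 < n) (hq : 0 ≤ q) :
    1 ≤ E := by nlinarith [sq_nonneg (q + 1)]

lemma main_aux : ∀ (M : ℕ) (l : List ℤ), l.length ≤ M → IsString l →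
    hjN l ∣ (hjD l + 1) ^ 2 → ¬ IsDuVal l → TGen l := by
  intro M
  induction M with
  | zero =>
    intro l hlen hs _ _
    exact absurd (List.length_eq_zero_iff.mp (by omega)) hs.1
  | succ M IH =>
    intro l hlen hs hdvd hnd
    obtain ⟨hne, hmem⟩ := hs
    match l, hne with
    | a :: t, _ =>
    have ha : 2 ≤ a := hmem a (by simp)
    rcases eq_or_ne t [] with rfl | htne
    · -- singleton case
      simp only [hjN_cons, hjD_cons, hjN_nil, hjD_nil] at hdvd
      norm_num at hdvd
      have ha4 : a ≤ 4 := Int.le_of_dvd (by norm_num) hdvd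
      have hne2 : a ≠ 2 := by
        intro h
        exact hnd (by intro x hx; simp at hx; omega)
      obtain ⟨c, hc⟩ := hdvd
      have : a = 4 := by interval_cases a <;> omega
      rw [this]
      exact TGen.four
    · -- length ≥ 2
      obtain ⟨mid, b, rfl⟩ : ∃ mid b, t = mid ++ [b] := by
        rcases t.eq_nil_or_concat with h | ⟨L, x, h⟩
        · exact absurd h htne
        · exact ⟨L, x, by simp [h]⟩
      have hmemt : ∀ x ∈ mid ++ [b], 2 ≤ x := fun x hx => hmem x (by simp [hx])
      have hmemm : ∀ x ∈ mid, 2 ≤ x := fun x hx => hmemt x (by simp [hx])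
      have hmems : ∀ x ∈ a :: mid, 2 ≤ x := by
        intro x hx
        rcases List.mem_cons.mp hx with rfl | hx
        · exact ha
        · exact hmemm x hx
      have hb : 2 ≤ b := hmemt b (by simp)
      obtain ⟨B1, B2, B3, B4, B5, B6⟩ := hjBounds (a :: (mid ++ [b])) hmem
      have hdet := hjDet (a :: (mid ++ [b]))
      obtain ⟨E, hE⟩ := hdvd
      have hq2 : 2 ≤ hjD (a :: (mid ++ [b])) := by
        rw [hjD_cons]
        exact hjN_two_le _ hmemt (by simp)
      -- q ≤ n - 3
      have hq1 : hjD (a :: (mid ++ [b])) ≠ hjN (a :: (mid ++ [b])) - 1 :=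
        fun h => hnd (den_duVal _ hmem h)
      have hqn2 : hjD (a :: (mid ++ [b])) ≠ hjN (a :: (mid ++ [b])) - 2 := by
        intro h
        rw [h] at hE
        have h1 : hjN (a :: (mid ++ [b])) * (E - hjN (a :: (mid ++ [b])) + 2) = 1 := by
          linear_combination -hE
        have h2 : hjN (a :: (mid ++ [b])) ≤ 1 := Int.le_of_dvd one_pos ⟨_, h1.symm⟩
        omega
      have hql : hjD (a :: (mid ++ [b])) ≤ hjN (a :: (mid ++ [b])) - 3 := by omega
      -- p = n - q - 2
      have hcop : IsCoprime (hjN (a :: (mid ++ [b]))) (hjD (a :: (mid ++ [b]))) :=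
        ⟨-hjV (a :: (mid ++ [b])), hjP (a :: (mid ++ [b])), by linear_combination hdet⟩
      have hd2 : hjN (a :: (mid ++ [b])) ∣
          (hjP (a :: (mid ++ [b])) - (hjN (a :: (mid ++ [b])) - hjD (a :: (mid ++ [b])) - 2)) *
            hjD (a :: (mid ++ [b])) :=
        ⟨hjV (a :: (mid ++ [b])) - hjD (a :: (mid ++ [b])) + E, by linear_combination hdet + hE⟩
      obtain ⟨c, hc⟩ := hcop.dvd_of_dvd_mul_right hd2
      have hPle : hjP (a :: (mid ++ [b])) ≤ hjN (a :: (mid ++ [b])) - 1 := by omega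
      have hp1 : 1 ≤ hjP (a :: (mid ++ [b])) := by
        have := hjP_one_le (a :: (mid ++ [b])) hmem (by simp)
        omega
      have hp : hjP (a :: (mid ++ [b])) =
          hjN (a :: (mid ++ [b])) - hjD (a :: (mid ++ [b])) - 2 := by
        have h0 := eq_zero_of_bounded hc (by omega) (by omega) (by omega)
        omega
      -- v = q - E
      have hv : hjV (a :: (mid ++ [b])) = hjD (a :: (mid ++ [b])) - E := by
        have h0 : hjN (a :: (mid ++ [b])) *
            (hjD (a :: (mid ++ [b])) - E - hjV (a :: (mid ++ [b]))) = 0 := by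
          linear_combination hdet + hE - hjD (a :: (mid ++ [b])) * hp
        rcases mul_eq_zero.mp h0 with h | h <;> omega
      have hE1 : 1 ≤ E := one_le_of_sq hE (by omega) (by omega)
      -- exclusions
      have hne0 : hjN (a :: (mid ++ [b])) ≠ 2 * hjD (a :: (mid ++ [b])) := by
        intro h
        have h1 : hjD (a :: (mid ++ [b])) *
            (hjP (a :: (mid ++ [b])) - 2 * hjV (a :: (mid ++ [b]))) = 1 := by
          linear_combination hdet + hjV (a :: (mid ++ [b])) * h
        have := Int.le_of_dvd one_pos ⟨_, h1.symm⟩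
        omega
      have hne1 : hjN (a :: (mid ++ [b])) ≠ 2 * hjD (a :: (mid ++ [b])) + 1 := by
        intro h
        have h1 : hjN (a :: (mid ++ [b])) * (4 * E - hjN (a :: (mid ++ [b])) - 2) = 1 := by
          linear_combination -4 * hE -
            (hjN (a :: (mid ++ [b])) + 2 * hjD (a :: (mid ++ [b])) + 3) * h
        have := Int.le_of_dvd one_pos ⟨_, h1.symm⟩
        omega
      have hne3 : hjN (a :: (mid ++ [b])) ≠ 2 * hjD (a :: (mid ++ [b])) + 3 := by
        intro h
        have h1 : hjN (a :: (mid ++ [b])) * (4 * E - hjN (a :: (mid ++ [b])) + 2) = 1 := by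
          linear_combination -4 * hE -
            (hjN (a :: (mid ++ [b])) + 2 * hjD (a :: (mid ++ [b])) + 1) * h
        have := Int.le_of_dvd one_pos ⟨_, h1.symm⟩
        omega
      have hne4 : hjN (a :: (mid ++ [b])) ≠ 2 * hjD (a :: (mid ++ [b])) + 4 := by
        intro h
        have h1 : (hjD (a :: (mid ++ [b])) + 2) * (2 * E - hjD (a :: (mid ++ [b]))) = 1 := by
          linear_combination -hE - E * h
        have := Int.le_of_dvd one_pos ⟨_, h1.symm⟩
        omega
      -- head bounds
      have hcons := hj_concat mid b
      have hntq : hjN (mid ++ [b]) = hjD (a :: (mid ++ [b])) := (hjD_cons a (mid ++ [b])).symm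
      have hnl : hjN (a :: (mid ++ [b])) =
          a * hjD (a :: (mid ++ [b])) - hjD (mid ++ [b]) := by
        rw [hjN_cons, hjD_cons]
      have hdt1 : 1 ≤ hjD (mid ++ [b]) := hjD_one_le _ hmemt (by simp)
      have hdtlt : hjD (mid ++ [b]) < hjN (mid ++ [b]) := (hjBounds _ hmemt).2.1
      -- last-entry bounds
      have hcons2 := hj_concat (a :: mid) b
      simp only [List.cons_append] at hcons2
      have hpl : hjP (a :: (mid ++ [b])) = hjN (a :: mid) := hcons2.2.2.1
      have hA : hjN (a :: (mid ++ [b])) =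
          b * hjP (a :: (mid ++ [b])) - hjP (a :: mid) := by
        rw [hpl]; exact hcons2.1
      have hsP : 1 ≤ hjP (a :: mid) := hjP_one_le _ hmems (by simp)
      have hsNP : 1 ≤ hjN (a :: mid) - hjP (a :: mid) := by
        obtain ⟨_, _, _, _, C5, C6⟩ := hjBounds (a :: mid) hmems
        linarith
      have htri : hjN (a :: (mid ++ [b])) < 2 * hjD (a :: (mid ++ [b])) ∨
          hjN (a :: (mid ++ [b])) = 2 * hjD (a :: (mid ++ [b])) + 2 ∨
          2 * hjD (a :: (mid ++ [b])) + 4 < hjN (a :: (mid ++ [b])) := by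
        omega
      rcases htri with hcase | hcase | hcase
      · -- Case B : n < 2q, head = 2, last ≥ 3
        have ha2 : a = 2 := by
          by_contra hx
          have h3 : (3 : ℤ) ≤ a := by omega
          have hm := mul_le_mul_of_nonneg_right h3
            (show (0 : ℤ) ≤ hjD (a :: (mid ++ [b])) by omega)
          linarith only [hm, hnl, hcase, hdtlt, hntq]
        subst ha2
        have hb3 : 3 ≤ b := by
          by_contra hx
          have hb2 : b = 2 := by omega
          subst hb2
          omega
        -- values of l' = mid ++ [b-1]
        have hVl : hjV (2 :: (mid ++ [b])) = hjN mid := by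
          rw [hjV_cons, hcons.2.2.1]
        have hPl : hjP (2 :: (mid ++ [b])) = 2 * hjN mid - hjD mid := by
          rw [hjP_cons, hcons.2.2.1, hcons.2.2.2]
        have hNl' : hjN (mid ++ [b - 1]) = E := by
          have h1 : hjN (mid ++ [b - 1]) = hjN (mid ++ [b]) - hjN mid := by
            rw [(hj_concat mid (b - 1)).1, hcons.1]; ring
          omega
        have hDl' : hjD (mid ++ [b - 1]) = 2 * E - hjD (2 :: (mid ++ [b])) - 2 := by
          have h1 : hjD (mid ++ [b - 1]) = hjD (mid ++ [b]) - hjD mid := by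
            rw [(hj_concat mid (b - 1)).2.1, hcons.2.1]; ring
          omega
        have hs' : IsString (mid ++ [b - 1]) := by
          refine ⟨by simp, fun x hx => ?_⟩
          rcases List.mem_append.mp hx with hx | hx
          · exact hmemm x hx
          · simp at hx; omega
        have hdvd' : hjN (mid ++ [b - 1]) ∣ (hjD (mid ++ [b - 1]) + 1) ^ 2 := by
          rw [hNl', hDl']
          exact ⟨hjN (2 :: (mid ++ [b])) - 4 * hjD (2 :: (mid ++ [b])) - 4 + 4 * E,
            by linear_combination hE⟩
        have hnd' : ¬ IsDuVal (mid ++ [b - 1]) := by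
          intro hdv
          have hden := duVal_den _ hdv
          rw [hNl', hDl'] at hden
          have hqE : hjD (2 :: (mid ++ [b])) = E - 1 := by omega
          have h0 : E * (hjN (2 :: (mid ++ [b])) - E) = 0 := by
            linear_combination -hE + (hjD (2 :: (mid ++ [b])) + 1 + E) * hqE
          rcases mul_eq_zero.mp h0 with h | h <;> omega
        have hlen' : (mid ++ [b - 1]).length ≤ M := by
          simp at hlen ⊢; omega
        have hT := IH _ hlen' hs' hdvd' hnd'
        have hfin := TGen.left hT
        have hdl : (mid ++ [b - 1]).dropLast = mid := by simp
        have hgl : (mid ++ [b - 1]).getLastI = b - 1 := by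
          simp [List.getLastI_eq_getLast?]
        rw [hdl, hgl] at hfin
        have hb1 : b - 1 + 1 = b := by ring
        rw [hb1] at hfin
        exact hfin
      · -- Case A : n = 2q + 2, chain
        have hw : hjD (a :: (mid ++ [b])) *
            (hjP (a :: (mid ++ [b])) - 2 * hjV (a :: (mid ++ [b]))) =
            2 * hjV (a :: (mid ++ [b])) + 1 := by
          linear_combination hdet + hjV (a :: (mid ++ [b])) * hcase
        have hodd : ¬ (2 : ℤ) ∣ hjD (a :: (mid ++ [b])) := by
          intro ⟨m, hm⟩
          have h2 : (2 : ℤ) ∣ 2 * hjV (a :: (mid ++ [b])) + 1 :=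
            ⟨m * (hjP (a :: (mid ++ [b])) - 2 * hjV (a :: (mid ++ [b]))),
              by rw [← hw, hm]; ring⟩
          omega
        have hq3 : 3 ≤ hjD (a :: (mid ++ [b])) := by omega
        have ha3 : a = 3 := by
          have h1 : a ≤ 3 := by
            by_contra hx
            have h4 : (4 : ℤ) ≤ a := by omega
            have hm := mul_le_mul_of_nonneg_right h4
              (show (0 : ℤ) ≤ hjD (a :: (mid ++ [b])) by omega)
            linarith only [hm, hnl, hcase, hdtlt, hntq, hq3]
          have h2 : 3 ≤ a := by
            by_contra hx
            have h4 : a ≤ 2 := by omega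
            have hm := mul_le_mul_of_nonneg_right h4
              (show (0 : ℤ) ≤ hjD (a :: (mid ++ [b])) by omega)
            linarith only [hm, hnl, hcase, hdt1]
          omega
        subst ha3
        have hdt : hjD (mid ++ [b]) = hjN (mid ++ [b]) - 2 := by omega
        obtain ⟨k, hk⟩ := chain_eq (mid ++ [b]) hmemt (by simp) hdt
        rw [hk]
        exact TGen.chain k
      · -- Case C : n > 2q + 4, head ≥ 3, last = 2
        have ha3 : 3 ≤ a := by
          by_contra hx
          have ha2 : a = 2 := by omega
          subst ha2
          omega
        have hb2 : b = 2 := by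
          by_contra hx
          have h3 : (3 : ℤ) ≤ b := by omega
          have hm := mul_le_mul_of_nonneg_right h3
            (show (0 : ℤ) ≤ hjP (a :: (mid ++ [b])) by omega)
          linarith only [hm, hA, hsNP, hpl, hp, hcase]
        subst hb2
        -- values of l' = (a-1) :: mid
        have hVl : hjV (a :: (mid ++ [2])) = hjN mid := by
          rw [hjV_cons, hcons.2.2.1]
        have hPl : hjP (a :: (mid ++ [2])) = a * hjN mid - hjD mid := by
          rw [hjP_cons, hcons.2.2.1, hcons.2.2.2]
        have hN'' : hjN ((a - 1) :: mid) =
            hjP (a :: (mid ++ [2])) - hjV (a :: (mid ++ [2])) := by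
          rw [hjN_cons, hPl, hVl]; ring
        have hD'' : hjD ((a - 1) :: mid) = hjV (a :: (mid ++ [2])) := by
          rw [hjD_cons, hVl]
        have hs'' : IsString ((a - 1) :: mid) := by
          refine ⟨by simp, fun x hx => ?_⟩
          rcases List.mem_cons.mp hx with rfl | hx
          · omega
          · exact hmemm x hx
        have hdvd'' : hjN ((a - 1) :: mid) ∣ (hjD ((a - 1) :: mid) + 1) ^ 2 := by
          rw [hN'', hD'', hp, hv]
          exact ⟨E, by linear_combination hE⟩
        have hnd'' : ¬ IsDuVal ((a - 1) :: mid) := by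
          intro hdv
          have hden := duVal_den _ hdv
          rw [hN'', hD'', hp, hv] at hden
          have hn3 : hjN (a :: (mid ++ [2])) = 3 * hjD (a :: (mid ++ [2])) + 3 - 2 * E := by
            omega
          have h0 : (hjD (a :: (mid ++ [2])) + 1 - E) *
              (hjD (a :: (mid ++ [2])) + 1 - 2 * E) = 0 := by
            linear_combination hE + E * hn3
          rcases mul_eq_zero.mp h0 with h | h <;> omega
        have hlen'' : ((a - 1) :: mid).length ≤ M := by
          simp at hlen ⊢; omega
        have hT := IH _ hlen'' hs'' hdvd'' hnd''
        have hfin := TGen.right hT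
        simp only [List.headI_cons, List.tail_cons] at hfin
        have ha1 : a - 1 + 1 = a := by ring
        rw [ha1] at hfin
        exact hfin

/-- Every non-Du Val string of type T is obtained from `[4]`, `[3,3]` or
`[3,2,…,2,3]` by iterating the two extension operations. -/
theorem tString_mem_tGen (a : List ℤ) (h : IsTString a) (hnd : ¬ IsDuVal a) :
    TGen a := by
  obtain ⟨hs, n, q, hq1, hqn, hcop, hval, hdvd⟩ := h
  have hval2 := hjValue_eq a hs.2
  obtain ⟨B1, B2, B3, B4, B5, B6⟩ := hjBounds a hs.2
  have hD1 : 1 ≤ hjD a := hjD_one_le a hs.2 hs.1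
  have hdet := hjDet a
  have hqQ : (0 : ℚ) < (q : ℚ) := by exact_mod_cast hq1
  have hDQ : (0 : ℚ) < ((hjD a : ℤ) : ℚ) := by exact_mod_cast hD1
  have hvv : (n : ℚ) / (q : ℚ) = ((hjN a : ℤ) : ℚ) / ((hjD a : ℤ) : ℚ) :=
    hval.symm.trans hval2
  rw [div_eq_div_iff hqQ.ne' hDQ.ne'] at hvv
  have hcrossZ : (n : ℤ) * hjD a = hjN a * (q : ℤ) := by exact_mod_cast hvv
  have hcopZ : IsCoprime ((q : ℕ) : ℤ) ((n : ℕ) : ℤ) := by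
    rw [Int.isCoprime_iff_gcd_eq_one, Int.gcd_natCast_natCast]
    exact hcop.symm
  have hcopND : IsCoprime (hjD a) (hjN a) := ⟨hjP a, -hjV a, by linear_combination hdet⟩
  have hqD : ((q : ℕ) : ℤ) ∣ hjD a :=
    hcopZ.dvd_of_dvd_mul_left ⟨hjN a, by linear_combination hcrossZ⟩
  have hDq : hjD a ∣ ((q : ℕ) : ℤ) :=
    hcopND.dvd_of_dvd_mul_left ⟨(n : ℤ), by linear_combination -hcrossZ⟩
  have hDq' : hjD a = ((q : ℕ) : ℤ) :=
    Int.dvd_antisymm (by omega) (by positivity) hDq hqD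
  have hNn : hjN a = ((n : ℕ) : ℤ) := by
    have h2 : (n : ℤ) * hjD a = hjN a * hjD a := by rw [hcrossZ, hDq']
    exact (mul_right_cancel₀ (by omega) h2).symm
  have hdvdZ : hjN a ∣ (hjD a + 1) ^ 2 := by
    rw [hNn, hDq']
    exact_mod_cast Int.natCast_dvd_natCast.mpr hdvd
  exact main_aux a.length a le_rfl ⟨hs.1, hs.2⟩ hdvdZ hnd
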